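/- For each α ∈ {0, 1, −1}, the family of vector fields on ℝ³ given by L_n = e^{−nt} ∂_t + e^{−nt}[n + (α n(n−1)/2) e^{−x}] ∂_x + (n(n−1)/2) e^{−nt−x} ∂_u (n ∈ ℤ) is a realization of the Witt algebra: [L_m, L_n] = (m−n)L_{m+n} for all m, n ∈ ℤ. (This is the realization 𝔚₁₁ of Theorem 1.) -/

import Mathlib

/-- Lie bracket of smooth vector fields on `ℝ³` (coordinates `(t,x,u)`), identified with
`C^∞` maps `ℝ³ → ℝ³`: `[X,Y](p) = (DY)(p)(X(p)) - (DX)(p)(Y(p))`. -/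
noncomputable def lieBracket3 (X Y : ℝ × ℝ × ℝ → ℝ × ℝ × ℝ) : ℝ × ℝ × ℝ → ℝ × ℝ × ℝ :=
  fun p => fderiv ℝ Y p (X p) - fderiv ℝ X p (Y p)

/-- The realization `𝔚₁₁`:
`L_n = e^{-nt} ∂_t + e^{-nt}[n + (α n(n-1)/2) e^{-x}] ∂_x + (n(n-1)/2) e^{-nt-x} ∂_u`. -/
noncomputable def W11field (α : ℝ) (n : ℤ) : ℝ × ℝ × ℝ → ℝ × ℝ × ℝ := fun p =>
  (Real.exp (-(n : ℝ) * p.1),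
   Real.exp (-(n : ℝ) * p.1) *
     ((n : ℝ) + (α * (n : ℝ) * ((n : ℝ) - 1) / 2) * Real.exp (-p.2.1)),
   ((n : ℝ) * ((n : ℝ) - 1) / 2) * Real.exp (-(n : ℝ) * p.1 - p.2.1))


open Real ContinuousLinearMap in
lemma fderiv_W11_apply (α : ℝ) (n : ℤ) (p v : ℝ × ℝ × ℝ) :
    fderiv ℝ (W11field α n) p v =
      ( -(n:ℝ) * Real.exp (-(n:ℝ)*p.1) * v.1,
        -(n:ℝ) * Real.exp (-(n:ℝ)*p.1) *
          ((n:ℝ) + (α*(n:ℝ)*((n:ℝ)-1)/2) * Real.exp (-p.2.1)) * v.1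
          - Real.exp (-(n:ℝ)*p.1) * ((α*(n:ℝ)*((n:ℝ)-1)/2) * Real.exp (-p.2.1)) * v.2.1,
        ((n:ℝ)*((n:ℝ)-1)/2) * Real.exp (-(n:ℝ)*p.1 - p.2.1) * (-(n:ℝ)*v.1 - v.2.1) ) := by
  have hT : HasFDerivAt (fun q : ℝ × ℝ × ℝ => q.1) (fst ℝ ℝ (ℝ × ℝ)) p := hasFDerivAt_fst
  have hX : HasFDerivAt (fun q : ℝ × ℝ × ℝ => q.2.1)
      ((fst ℝ ℝ ℝ).comp (snd ℝ ℝ (ℝ × ℝ))) p := hasFDerivAt_fst.comp p hasFDerivAt_snd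
  have h1 : HasFDerivAt (fun q : ℝ × ℝ × ℝ => -(n:ℝ) * q.1)
      ((-(n:ℝ)) • fst ℝ ℝ (ℝ × ℝ)) p := hT.const_mul _
  have he1 := h1.exp
  have hx : HasFDerivAt (fun q : ℝ × ℝ × ℝ => -q.2.1)
      (-((fst ℝ ℝ ℝ).comp (snd ℝ ℝ (ℝ × ℝ)))) p := hX.neg
  have hex := hx.exp
  have h2 : HasFDerivAt (fun q : ℝ × ℝ × ℝ =>
      (n:ℝ) + (α*(n:ℝ)*((n:ℝ)-1)/2) * Real.exp (-q.2.1))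
      ((α*(n:ℝ)*((n:ℝ)-1)/2) • (Real.exp (-p.2.1) • -((fst ℝ ℝ ℝ).comp (snd ℝ ℝ (ℝ × ℝ)))))
      p := (hex.const_mul _).const_add _
  have hc2 := he1.mul h2
  have h3i : HasFDerivAt (fun q : ℝ × ℝ × ℝ => -(n:ℝ) * q.1 - q.2.1)
      ((-(n:ℝ)) • fst ℝ ℝ (ℝ × ℝ) - (fst ℝ ℝ ℝ).comp (snd ℝ ℝ (ℝ × ℝ))) p := h1.sub hX
  have hc3 := (h3i.exp).const_mul ((n:ℝ)*((n:ℝ)-1)/2)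
  have H := (he1.prodMk (hc2.prodMk hc3))
  have H' : HasFDerivAt (W11field α n) _ p := H
  rw [H'.fderiv]
  simp [Prod.ext_iff, ContinuousLinearMap.smul_apply]
  refine ⟨by ring, by ring, by ring⟩

/-- For each `α ∈ {0, 1, -1}`, the family `(W11field α n)` is a realization of the Witt
algebra on `ℝ³`: `[L_m, L_n] = (m - n) L_{m+n}` for all `m, n ∈ ℤ`. -/
theorem W11_realization (α : ℝ) (hα : α = 0 ∨ α = 1 ∨ α = -1) :
    ∀ m n : ℤ, lieBracket3 (W11field α m) (W11field α n)
      = fun p => ((m : ℝ) - (n : ℝ)) • W11field α (m + n) p := by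
  intro m n
  funext p
  have h1 : Real.exp (-((m:ℝ)+(n:ℝ)) * p.1)
      = Real.exp (-(m:ℝ)*p.1) * Real.exp (-(n:ℝ)*p.1) := by
    rw [← Real.exp_add]; ring_nf
  have h2 : Real.exp (-(m:ℝ)*p.1 - p.2.1)
      = Real.exp (-(m:ℝ)*p.1) * Real.exp (-p.2.1) := by
    rw [← Real.exp_add]; ring_nf
  have h3 : Real.exp (-(n:ℝ)*p.1 - p.2.1)
      = Real.exp (-(n:ℝ)*p.1) * Real.exp (-p.2.1) := by
    rw [← Real.exp_add]; ring_nf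
  have h4 : Real.exp (-((m:ℝ)+(n:ℝ)) * p.1 - p.2.1)
      = Real.exp (-(m:ℝ)*p.1) * Real.exp (-(n:ℝ)*p.1) * Real.exp (-p.2.1) := by
    rw [← Real.exp_add, ← Real.exp_add]; ring_nf
  simp only [lieBracket3, fderiv_W11_apply, W11field, Prod.smul_def, smul_eq_mul,
    Prod.mk_sub_mk, Prod.ext_iff]
  push_cast
  rw [h1, h2, h3, h4]
  refine ⟨by ring, by ring, by ring⟩
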